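/- Let $\mathcal{D}$ be a division ring containing the group ring $RG$ of a group $G$ over a ring $R$. Suppose $H \leq G$ is a subgroup, $c : G \to \mathcal{D}$ is a 1-cocycle (i.e. $c(gh) = c(g) + g\cdot c(h)$ for all $g,h \in G$, where $G$ acts on $\mathcal{D}$ by left multiplication via the embedding) that vanishes on $H$, and $g \in G$ satisfies $c(g) \neq 0$. Then the subgroup generated by $H$ and $g$ is isomorphic to the free product $H * \langle g \rangle$. -/

import Mathlib

set_option linter.unusedSectionVars false

namespace PTAux

variable {R D G : Type*} [Ring R] [Nontrivial R] [DivisionRing D] [Group G]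

/-- `(g^n - 1)/(g - 1)` as an element of the monoid algebra. -/
noncomputable def Eg (R : Type*) [Ring R] {G : Type*} [Group G] (g : G) (n : ℤ) :
    MonoidAlgebra R G :=
  (∑ i ∈ Finset.range n.toNat, MonoidAlgebra.single (g ^ i) 1) -
    ∑ i ∈ Finset.range (-n).toNat, MonoidAlgebra.single (g ^ (-((i : ℤ) + 1))) 1

lemma Eg_zero (g : G) : Eg R g 0 = 0 := by simp [Eg]

lemma Eg_succ (g : G) (n : ℤ) :
    Eg R g (n + 1) = Eg R g n + MonoidAlgebra.single (g ^ n) 1 := by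
  rcases le_or_gt 0 n with h | h
  · have h1 : (n + 1).toNat = n.toNat + 1 := by omega
    have h2 : (-n).toNat = 0 := by omega
    have h3 : (-(n + 1)).toNat = 0 := by omega
    have h4 : g ^ n.toNat = g ^ n := by rw [← zpow_natCast, Int.toNat_of_nonneg h]
    rw [Eg, Eg, h1, h2, h3, Finset.sum_range_succ, h4]
    simp only [Finset.range_zero, Finset.sum_empty, sub_zero]
    try abel
  · have h1 : (n + 1).toNat = 0 := by omega
    have h1' : n.toNat = 0 := by omega
    have h2 : (-n).toNat = (-(n + 1)).toNat + 1 := by omega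
    have h4 : g ^ (-(((-(n + 1)).toNat : ℤ) + 1)) = g ^ n := by congr 1; omega
    rw [Eg, Eg, h1, h1', h2, Finset.sum_range_succ, h4]
    simp only [Finset.range_zero, Finset.sum_empty, zero_sub]
    abel

lemma Eg_mul (g : G) (n : ℤ) :
    Eg R g n * (MonoidAlgebra.single g (1 : R) - 1) =
      MonoidAlgebra.single (g ^ n) 1 - 1 := by
  induction n using Int.induction_on with
  | zero => simp [Eg_zero, MonoidAlgebra.one_def]
  | succ i ih =>
    rw [Eg_succ, add_mul, ih, mul_sub, MonoidAlgebra.single_mul_single, mul_one, mul_one,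
      ← zpow_add_one]
    abel
  | pred i ih =>
    have hs := Eg_succ (R := R) g (-(i : ℤ) - 1)
    rw [sub_add_cancel] at hs
    have h5 : Eg R g (-(i : ℤ) - 1) =
        Eg R g (-(i : ℤ)) - MonoidAlgebra.single (g ^ (-(i : ℤ) - 1)) 1 := by
      rw [hs]; abel
    rw [h5, sub_mul, ih, mul_sub, MonoidAlgebra.single_mul_single, mul_one, mul_one,
      ← zpow_add_one, sub_add_cancel]
    abel


section Cocycle

variable (f : MonoidAlgebra R G →+* D) (c : G → D)

lemma c_one (hc : ∀ x y : G, c (x * y) = c x + f (MonoidAlgebra.of R G x) * c y) :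
    c 1 = 0 := by
  have h := hc 1 1
  rw [one_mul, map_one, map_one, one_mul] at h
  exact (left_eq_add.mp h)

lemma c_zpow (hc : ∀ x y : G, c (x * y) = c x + f (MonoidAlgebra.of R G x) * c y)
    (g : G) : ∀ n : ℤ, c (g ^ n) = f (Eg R g n) * c g := by
  intro n
  induction n using Int.induction_on with
  | zero => rw [zpow_zero, c_one f c hc, Eg_zero, map_zero, zero_mul]
  | succ i ih =>
    rw [zpow_add_one, hc, ih, Eg_succ, map_add, add_mul]
    rfl
  | pred i ih =>
    have hs := Eg_succ (R := R) g (-(i : ℤ) - 1)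
    rw [sub_add_cancel] at hs
    have hmul : g ^ (-(i : ℤ)) = g ^ (-(i : ℤ) - 1) * g := by
      rw [← zpow_add_one, sub_add_cancel]
    rw [hmul, hc] at ih
    have : f (MonoidAlgebra.of R G (g ^ (-(i : ℤ) - 1))) * c g =
        f (MonoidAlgebra.single (g ^ (-(i : ℤ) - 1)) (1 : R)) * c g := rfl
    rw [this] at ih
    rw [hs, map_add, add_mul] at ih
    exact (add_right_cancel ih.symm).symm

variable (hf : Function.Injective f)
    (hc : ∀ x y : G, c (x * y) = c x + f (MonoidAlgebra.of R G x) * c y)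
    {g : G} (hg : c g ≠ 0)

include f c hf hc hg

lemma pow_ne_one : ∀ n : ℕ, n ≠ 0 → g ^ n ≠ 1 := by
  intro n
  induction n using Nat.strong_induction_on with
  | _ n IH =>
  intro hn h1
  set S : MonoidAlgebra R G := ∑ i ∈ Finset.range n, MonoidAlgebra.single (g ^ i) (1 : R)
    with hS
  classical
  have hS1 : S.coeff 1 = 1 := by
    rw [hS, MonoidAlgebra.coeff_sum, Finsupp.finset_sum_apply]
    rw [Finset.sum_eq_single 0]
    · simp
    · intro i hi hi0
      rw [MonoidAlgebra.coeff_single, Finsupp.single_apply, if_neg]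
      exact fun hgi => IH i (Finset.mem_range.mp hi) hi0 hgi
    · intro h0
      exact absurd (Finset.mem_range.mpr (Nat.pos_of_ne_zero hn)) h0
  have hSne : S ≠ 0 := by
    intro h
    rw [h, MonoidAlgebra.coeff_zero, Finsupp.coe_zero, Pi.zero_apply] at hS1
    exact one_ne_zero hS1.symm
  have hEq : Eg R g (n : ℤ) = S := by
    rw [Eg, hS]
    simp [zpow_natCast]
  have hcn := c_zpow f c hc g (n : ℤ)
  rw [hEq, zpow_natCast, h1, c_one f c hc] at hcn
  exact mul_ne_zero (fun h => hSne (hf (by rwa [map_zero]))) hg hcn.symm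

lemma zpow_ne_one : ∀ n : ℤ, n ≠ 0 → g ^ n ≠ 1 := by
  intro n hn h1
  rcases lt_trichotomy n 0 with h | h | h
  · have h2 : g ^ (-n).toNat = 1 := by
      rw [← zpow_natCast, Int.toNat_of_nonneg (by omega), zpow_neg, h1, inv_one]
    exact pow_ne_one f c hf hc hg (-n).toNat (by omega) h2
  · exact hn h
  · have h2 : g ^ n.toNat = 1 := by
      rw [← zpow_natCast, Int.toNat_of_nonneg (by omega)]; exact h1
    exact pow_ne_one f c hf hc hg n.toNat (by omega) h2

lemma Eg_ne_zero {n : ℤ} (hn : n ≠ 0) : Eg R g n ≠ 0 := by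
  intro h
  have hm := Eg_mul (R := R) g n
  rw [h, zero_mul] at hm
  rw [eq_comm, sub_eq_zero, MonoidAlgebra.one_def] at hm
  rcases MonoidAlgebra.single_inj.mp hm with ⟨h1, -⟩ | ⟨h1, -⟩
  · exact zpow_ne_one f c hf hc hg n hn h1
  · exact one_ne_zero h1

lemma c_zpow_ne {n : ℤ} (hn : n ≠ 0) : c (g ^ n) ≠ 0 := by
  rw [c_zpow f c hc g]
  exact mul_ne_zero
    (fun h => Eg_ne_zero f c hf hc hg hn (hf (by rwa [map_zero]))) hg

end Cocycle

section Words

variable (g : G) (H : Subgroup G)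

/-- product of `g ^ n * h` over the list -/
noncomputable def evalW (l : List (ℤ × ↥H)) : G :=
  (l.map fun p => g ^ p.1 * (p.2 : G)).prod

noncomputable def Aw (R : Type*) [Ring R] {G : Type*} [Group G] (g : G) (H : Subgroup G) :
    List (ℤ × ↥H) → MonoidAlgebra R G
  | [] => 0
  | p :: t => Eg R g p.1 + MonoidAlgebra.single (g ^ p.1 * (p.2 : G)) 1 * Aw R g H t

noncomputable def Bw (R : Type*) [Ring R] {G : Type*} [Group G] (g : G) (H : Subgroup G)
    (l : List (ℤ × ↥H)) : MonoidAlgebra R G :=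
  Aw R g H l * (MonoidAlgebra.single g (1 : R) - 1)

lemma evalW_nil : evalW g H [] = 1 := rfl

lemma evalW_cons (p : ℤ × ↥H) (l : List (ℤ × ↥H)) :
    evalW g H (p :: l) = g ^ p.1 * (p.2 : G) * evalW g H l := by
  simp [evalW]

lemma evalW_append (l₁ l₂ : List (ℤ × ↥H)) :
    evalW g H (l₁ ++ l₂) = evalW g H l₁ * evalW g H l₂ := by
  simp [evalW]

lemma Bw_nil : Bw R g H [] = 0 := by simp [Bw, Aw]

lemma Bw_cons (p : ℤ × ↥H) (t : List (ℤ × ↥H)) :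
    Bw R g H (p :: t) = (MonoidAlgebra.single (g ^ p.1) 1 - 1) +
      MonoidAlgebra.single (g ^ p.1 * (p.2 : G)) 1 * Bw R g H t := by
  rw [Bw, Aw, add_mul, Eg_mul, mul_assoc, Bw]

variable (f : MonoidAlgebra R G →+* D) (c : G → D)
variable (hf : Function.Injective f)
    (hc : ∀ x y : G, c (x * y) = c x + f (MonoidAlgebra.of R G x) * c y)
    (hH : ∀ h ∈ H, c h = 0) (hg : c g ≠ 0)

include hc hH in
lemma c_evalW : ∀ l : List (ℤ × ↥H), c (evalW g H l) = f (Aw R g H l) * c g := by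
  intro l
  induction l with
  | nil =>
    rw [evalW_nil, c_one f c hc]
    simp [Aw]
  | cons p t ih =>
    rw [evalW_cons, mul_assoc, hc, hc, hH _ (SetLike.coe_mem p.2), zero_add, ih,
      c_zpow f c hc g p.1]
    have hsingle : (MonoidAlgebra.of R G (g ^ p.1) : MonoidAlgebra R G) *
        MonoidAlgebra.of R G (p.2 : G) = MonoidAlgebra.single (g ^ p.1 * (p.2 : G)) 1 := by
      rw [MonoidAlgebra.of_apply, MonoidAlgebra.of_apply, MonoidAlgebra.single_mul_single,
        mul_one]
    rw [show Aw R g H (p :: t) =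
        Eg R g p.1 + MonoidAlgebra.single (g ^ p.1 * (p.2 : G)) 1 * Aw R g H t from rfl,
      ← hsingle, map_add, map_mul, map_mul, add_mul, mul_assoc, mul_assoc]

include hc hH in
lemma supp_Bw : ∀ (t : List (ℤ × ↥H)) (x : G), (Bw R g H t).coeff x ≠ 0 →
    x = 1 ∨ ∃ (t₁ : List (ℤ × ↥H)) (n : ℤ) (hh : ↥H) (t₂ : List (ℤ × ↥H)),
      t = t₁ ++ (n, hh) :: t₂ ∧ c x = c (evalW g H t₁ * g ^ n) := by
  intro t
  induction t with
  | nil =>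
    intro x hx
    rw [Bw_nil] at hx
    simp at hx
  | cons p s ih =>
    intro x hx
    by_cases hx1 : x = 1
    · exact Or.inl hx1
    right
    have hcgn : ∀ y : G, c (g ^ p.1 * (p.2 : G) * y) = c (g ^ p.1 * (p.2 : G)) + 
        f (MonoidAlgebra.of R G (g ^ p.1 * (p.2 : G))) * c y := fun y => hc _ _
    have hcgh : c (g ^ p.1 * (p.2 : G)) = c (evalW g H [] * g ^ p.1) := by
      rw [evalW_nil, one_mul, hc, hH _ (SetLike.coe_mem p.2), mul_zero, add_zero]
    by_cases hxg : x = g ^ p.1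
    · refine ⟨[], p.1, p.2, s, by simp, ?_⟩
      rw [hxg, evalW_nil, one_mul]
    · classical
      have e1 : (MonoidAlgebra.single (g ^ p.1) (1 : R)).coeff x = 0 := by
        rw [MonoidAlgebra.coeff_single, Finsupp.single_apply, if_neg (fun e => hxg e.symm)]
      have e2 : (1 : MonoidAlgebra R G).coeff x = 0 := by
        rw [MonoidAlgebra.one_def, MonoidAlgebra.coeff_single, Finsupp.single_apply, if_neg (fun e => hx1 e.symm)]
      rw [Bw_cons, MonoidAlgebra.coeff_add, Finsupp.add_apply, MonoidAlgebra.coeff_sub,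
          Finsupp.sub_apply, e1, e2, sub_zero, zero_add] at hx
      rw [MonoidAlgebra.coeff_single_mul_apply, one_mul] at hx
      have hx3 : (Bw R g H s).coeff ((g ^ p.1 * (p.2 : G))⁻¹ * x) ≠ 0 := by
        intro h0
        rw [h0] at hx
        simp at hx
      rcases ih _ hx3 with h1 | ⟨t₁, m, hh, t₂, ht, hcy⟩
      · have hxval : x = g ^ p.1 * (p.2 : G) := (inv_mul_eq_one.mp h1).symm
        refine ⟨[], p.1, p.2, s, by simp, ?_⟩
        rw [hxval, hcgh]
      · refine ⟨p :: t₁, m, hh, t₂, by rw [ht, List.cons_append], ?_⟩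
        have hxeq : x = (g ^ p.1 * (p.2 : G)) * ((g ^ p.1 * (p.2 : G))⁻¹ * x) := by group
        conv_lhs => rw [hxeq, hc, hcy]
        conv_rhs => rw [evalW_cons, mul_assoc, hc]

include hf hc hH hg in
lemma master : ∀ (k : ℕ) (l : List (ℤ × ↥H)), l.length = k → l ≠ [] →
    (∀ p ∈ l, p.1 ≠ 0) → (∀ p ∈ l.dropLast, p.2 ≠ 1) → c (evalW g H l) ≠ 0 := by
  intro k
  induction k using Nat.strong_induction_on with
  | _ k IH =>
  intro l hlen hne hn hdrop
  classical
  obtain ⟨p, t, rfl⟩ := List.exists_cons_of_ne_nil hne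
  obtain ⟨n₁, h₁⟩ := p
  have hn₁ : n₁ ≠ 0 := hn _ (List.mem_cons_self)
  have hB : (Bw R g H t).coeff (((h₁⁻¹ : ↥H) : G)) = 0 := by
    by_contra hB
    rcases supp_Bw g H f c hc hH t _ hB with h1 | ⟨t₁, m, hh, t₂, ht, hcx⟩
    · have ht_ne : t ≠ [] := by
        rintro rfl
        rw [Bw_nil] at hB
        simp at hB
      obtain ⟨q, t', rfl⟩ := List.exists_cons_of_ne_nil ht_ne
      have hmem : ((n₁, h₁) : ℤ × ↥H) ∈ ((n₁, h₁) :: q :: t').dropLast := by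
        rw [List.dropLast_cons₂]
        exact List.mem_cons_self
      exact hdrop _ hmem (inv_eq_one.mp (OneMemClass.coe_eq_one.mp h1))
    · have hc0 : c (((h₁⁻¹ : ↥H) : G)) = 0 := hH _ (SetLike.coe_mem _)
      have hval : c (evalW g H t₁ * g ^ m) = 0 := by rw [← hcx, hc0]
      have hlt : t₁.length + 1 < k := by
        have := congrArg List.length ht
        simp [List.length_append] at this
        simp at hlen
        omega
      have hmm : ((m, hh) : ℤ × ↥H) ∈ (n₁, h₁) :: t := by
        rw [ht]
        exact List.mem_cons_of_mem _ (List.mem_append_right _ (List.mem_cons_self))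
      refine IH (t₁.length + 1) hlt (t₁ ++ [(m, (1 : ↥H))]) (by simp) (by simp) ?_ ?_ ?_
      · intro q hq
        rcases List.mem_append.mp hq with hq1 | hq2
        · exact hn _ (List.mem_cons_of_mem _ (ht ▸ List.mem_append_left _ hq1))
        · rw [List.mem_singleton.mp hq2]
          simpa using hn _ hmm
      · intro q hq
        rw [List.dropLast_concat] at hq
        apply hdrop
        have ht_ne : t ≠ [] := by rw [ht]; simp
        obtain ⟨r, t', hrt⟩ := List.exists_cons_of_ne_nil ht_ne
        rw [hrt, List.dropLast_cons₂]
        refine List.mem_cons_of_mem _ ?_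
        rw [← hrt, ht, List.dropLast_append_cons]
        exact List.mem_append_left _ hq
      · rw [evalW_append, evalW_cons, evalW_nil, OneMemClass.coe_one, mul_one, mul_one, hval]
  have hco : (Bw R g H ((n₁, h₁) :: t)).coeff (g ^ n₁) = 1 := by
    rw [Bw_cons, MonoidAlgebra.coeff_add, Finsupp.add_apply, MonoidAlgebra.coeff_sub,
      Finsupp.sub_apply]
    rw [MonoidAlgebra.coeff_single_mul_apply, one_mul]
    have harg : (g ^ n₁ * (h₁ : G))⁻¹ * g ^ n₁ = ((h₁⁻¹ : ↥H) : G) := by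
      simp [mul_inv_rev, mul_assoc]
    rw [harg, hB, MonoidAlgebra.coeff_single, Finsupp.single_eq_same]
    rw [MonoidAlgebra.one_def, MonoidAlgebra.coeff_single, Finsupp.single_apply,
      if_neg (fun e => zpow_ne_one f c hf hc hg n₁ hn₁ e.symm)]
    norm_num
  have hBne : Bw R g H ((n₁, h₁) :: t) ≠ 0 := by
    intro h0
    rw [h0] at hco
    simp at hco
  have hAne : Aw R g H ((n₁, h₁) :: t) ≠ 0 := fun h0 => hBne (by rw [Bw, h0, zero_mul])
  rw [c_evalW g H f c hc hH]
  exact mul_ne_zero (fun h0 => hAne (hf (by rwa [map_zero]))) hg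

section Parse

variable (M : Bool → Type*) [∀ b, Monoid (M b)] (FG : ∀ b, M b →* G)
variable (hT : ∀ m : M true, FG true m ∈ H)
    (hF : ∀ m : M false, FG false m ∈ Subgroup.zpowers g)
    (hi : ∀ b (m : M b), FG b m = 1 → m = 1)

include hT hF hi in
lemma parseW : ∀ (k : ℕ) (z : M false) (L' : List ((b : Bool) × M b)),
    L'.length ≤ k → (∀ l ∈ (⟨false, z⟩ :: L' : List ((b : Bool) × M b)), l.2 ≠ 1) →
    (⟨false, z⟩ :: L' : List ((b : Bool) × M b)).Chain' (fun a b => a.1 ≠ b.1) →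
    ∃ t : List (ℤ × ↥H), t ≠ [] ∧ (∀ p ∈ t, p.1 ≠ 0) ∧ (∀ p ∈ t.dropLast, p.2 ≠ 1) ∧
      ((⟨false, z⟩ :: L' : List ((b : Bool) × M b)).map fun l => FG l.1 l.2).prod
        = evalW g H t := by
  intro k
  induction k with
  | zero =>
    intro z L' hlen hone _
    have hL' : L' = [] := List.eq_nil_of_length_eq_zero (Nat.le_zero.mp hlen)
    subst hL'
    obtain ⟨n, hzn⟩ := Subgroup.mem_zpowers_iff.mp (hF z)
    have hn : n ≠ 0 := by
      rintro rfl
      exact hone ⟨false, z⟩ (List.mem_cons_self)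
        (hi false z (by rw [← hzn, zpow_zero]))
    refine ⟨[(n, 1)], by simp, by simpa using hn, by simp, ?_⟩
    simp [evalW, hzn]
  | succ k IH =>
    intro z L' hlen hone hchain
    obtain ⟨n, hzn⟩ := Subgroup.mem_zpowers_iff.mp (hF z)
    have hn : n ≠ 0 := by
      rintro rfl
      exact hone ⟨false, z⟩ (List.mem_cons_self)
        (hi false z (by rw [← hzn, zpow_zero]))
    match L' with
    | [] =>
      refine ⟨[(n, 1)], by simp, by simpa using hn, by simp, ?_⟩
      simp [evalW, hzn]
    | ⟨b, m⟩ :: L'' =>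
      have hb : b = true := by
        have := (List.isChain_cons_cons.mp hchain).1
        simp at this
        cases b
        · simp at this
        · rfl
      subst hb
      have hel_mem : FG true m ∈ H := hT m
      set hel : ↥H := ⟨FG true m, hel_mem⟩ with hhel
      have hel_ne : hel ≠ 1 := by
        intro h1
        apply hone ⟨true, m⟩ (List.mem_cons_of_mem _ (List.mem_cons_self))
        apply hi true m
        have := congrArg (Subtype.val) h1
        exact this
      match L'' with
      | [] =>
        refine ⟨[(n, hel)], by simp, by simpa using hn, by simp, ?_⟩
        simp [evalW, hzn]
        rfl
      | ⟨b2, m2⟩ :: L''' =>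
        have hb2 : b2 = false := by
          have := (List.isChain_cons_cons.mp (List.isChain_cons_cons.mp hchain).2).1
          cases b2
          · rfl
          · simp at this
        subst hb2
        have hlen' : L'''.length ≤ k := by
          simp at hlen
          omega
        have hone' : ∀ l ∈ (⟨false, m2⟩ :: L''' : List ((b : Bool) × M b)), l.2 ≠ 1 := by
          intro l hl
          exact hone l (List.mem_cons_of_mem _ (List.mem_cons_of_mem _ hl))
        have hchain' :
            (⟨false, m2⟩ :: L''' : List ((b : Bool) × M b)).Chain' (fun a b => a.1 ≠ b.1) :=
          (List.isChain_cons_cons.mp (List.isChain_cons_cons.mp hchain).2).2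
        obtain ⟨t'', ht''ne, ht''exp, ht''drop, ht''prod⟩ := IH m2 L''' hlen' hone' hchain'
        refine ⟨(n, hel) :: t'', by simp, ?_, ?_, ?_⟩
        · intro p hp
          rcases List.mem_cons.mp hp with rfl | hp'
          · exact hn
          · exact ht''exp _ hp'
        · intro p hp
          obtain ⟨q, t₃, rfl⟩ := List.exists_cons_of_ne_nil ht''ne
          rw [List.dropLast_cons₂] at hp
          rcases List.mem_cons.mp hp with rfl | hp'
          · exact hel_ne
          · exact ht''drop _ hp'
        · simp only [List.map_cons, List.prod_cons] at ht''prod ⊢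
          rw [ht''prod, evalW_cons]
          dsimp only
          rw [← hzn, mul_assoc]

include hf hc hH hg hT hF hi in
lemma keyList : ∀ L : List ((b : Bool) × M b), L ≠ [] → (∀ l ∈ L, l.2 ≠ 1) →
    L.Chain' (fun a b => a.1 ≠ b.1) → (L.map fun l => FG l.1 l.2).prod ≠ 1 := by
  intro L hne hone hchain
  obtain ⟨⟨b, m⟩, L', rfl⟩ := List.exists_cons_of_ne_nil hne
  cases b
  · obtain ⟨t, htne, hexp, hdrop, hprod⟩ :=
      parseW g H M FG hT hF hi L'.length m L' le_rfl hone hchain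
    rw [hprod]
    intro h1
    exact master g H f c hf hc hH hg t.length t rfl htne hexp hdrop
      (by rw [h1, c_one f c hc])
  · match L' with
    | [] =>
      simp only [List.map_cons, List.map_nil, List.prod_cons, List.prod_nil, mul_one]
      intro h1
      exact hone ⟨true, m⟩ (List.mem_cons_self) (hi true m h1)
    | ⟨b2, m2⟩ :: L'' =>
      have hb2 : b2 = false := by
        have := (List.isChain_cons_cons.mp hchain).1
        cases b2
        · rfl
        · simp at this
      subst hb2
      obtain ⟨t, htne, hexp, hdrop, hprod⟩ := parseW g H M FG hT hF hi L''.length m2 L''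
        le_rfl (fun l hl => hone l (List.mem_cons_of_mem _ hl))
        (List.isChain_cons_cons.mp hchain).2
      rw [List.map_cons, List.prod_cons, hprod]
      intro h1
      have hcv : c ((FG true m) * evalW g H t) = 0 := by rw [h1, c_one f c hc]
      rw [hc, hH _ (hT m), zero_add] at hcv
      have hofne : f (MonoidAlgebra.of R G (FG true m)) ≠ 0 := by
        intro h0
        have : MonoidAlgebra.of R G (FG true m) = 0 := hf (by rwa [map_zero])
        rw [MonoidAlgebra.of_apply] at this
        exact one_ne_zero (MonoidAlgebra.single_eq_zero.mp this)
      exact mul_ne_zero hofne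
        (master g H f c hf hc hH hg t.length t rfl htne hexp hdrop) hcv

end Parse

end Words

universe uM

def Mfam (X Y : Type uM) : Bool → Type uM := fun b => cond b X Y

instance {X Y : Type uM} [Monoid X] [Monoid Y] (b : Bool) : Monoid (Mfam X Y b) := by
  cases b
  · exact inferInstanceAs (Monoid Y)
  · exact inferInstanceAs (Monoid X)

end PTAux

/-- Peterson–Thom lemma: if `R[G]` embeds in a division ring `D`, `c : G → D` is a
1-cocycle (for the left-multiplication action of `G` on `D` via the embedding) vanishing
on a subgroup `H`, and `c g ≠ 0`, then `H` and `⟨g⟩` generate their free product inside `G`: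
the canonical map `H ∗ ⟨g⟩ → G` is injective. -/
theorem stmt_1 {R D G : Type*} [Ring R] [Nontrivial R] [DivisionRing D] [Group G]
    (f : MonoidAlgebra R G →+* D) (hf : Function.Injective f)
    (c : G → D)
    (hc : ∀ x y : G, c (x * y) = c x + f (MonoidAlgebra.of R G x) * c y)
    (H : Subgroup G) (hH : ∀ h ∈ H, c h = 0)
    (g : G) (hg : c g ≠ 0) :
    Function.Injective
      (Monoid.Coprod.lift H.subtype (Subgroup.zpowers g).subtype) := by
  classical
  let M := PTAux.Mfam ↥H ↥(Subgroup.zpowers g)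
  letI : ∀ b, Monoid (M b) := fun b =>
    inferInstanceAs (Monoid (PTAux.Mfam ↥H ↥(Subgroup.zpowers g) b))
  let FG : ∀ b, M b →* G := fun b =>
    match b with
    | true => H.subtype
    | false => (Subgroup.zpowers g).subtype
  let FE : ∀ b, M b →* Monoid.Coprod ↥H ↥(Subgroup.zpowers g) := fun b =>
    match b with
    | true => Monoid.Coprod.inl
    | false => Monoid.Coprod.inr
  let e : Monoid.Coprod ↥H ↥(Subgroup.zpowers g) →* Monoid.CoprodI M :=
    Monoid.Coprod.lift (@Monoid.CoprodI.of Bool M _ true) (@Monoid.CoprodI.of Bool M _ false)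
  let e' : Monoid.CoprodI M →* Monoid.Coprod ↥H ↥(Subgroup.zpowers g) :=
    Monoid.CoprodI.lift FE
  have he'e : ∀ u, e' (e u) = u := by
    intro u
    have hcomp : e'.comp e = MonoidHom.id _ := by
      apply Monoid.Coprod.hom_ext
      · ext x
        simp only [MonoidHom.comp_apply, MonoidHom.id_apply]
        show e' (e (Monoid.Coprod.inl x)) = Monoid.Coprod.inl x
        have h1 : e (Monoid.Coprod.inl x) = Monoid.CoprodI.of (M := M) (i := true) x :=
          Monoid.Coprod.lift_apply_inl _ _ x
        rw [h1]
        exact Monoid.CoprodI.lift_of (i := true) FE x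
      · ext x
        simp only [MonoidHom.comp_apply, MonoidHom.id_apply]
        show e' (e (Monoid.Coprod.inr x)) = Monoid.Coprod.inr x
        have h1 : e (Monoid.Coprod.inr x) = Monoid.CoprodI.of (M := M) (i := false) x :=
          Monoid.Coprod.lift_apply_inr _ _ x
        rw [h1]
        exact Monoid.CoprodI.lift_of (i := false) FE x
    have := DFunLike.congr_fun hcomp u
    simpa using this
  rw [injective_iff_map_eq_one]
  intro w hw
  have hlift : (Monoid.CoprodI.lift FG) (e w) = 1 := by
    have hcomp2 : (Monoid.CoprodI.lift FG).comp e =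
        Monoid.Coprod.lift H.subtype (Subgroup.zpowers g).subtype := by
      apply Monoid.Coprod.hom_ext
      · ext x
        simp only [MonoidHom.comp_apply]
        show Monoid.CoprodI.lift FG (e (Monoid.Coprod.inl x)) = H.subtype x
        have h1 : e (Monoid.Coprod.inl x) = Monoid.CoprodI.of (M := M) (i := true) x :=
          Monoid.Coprod.lift_apply_inl _ _ x
        rw [h1]
        exact Monoid.CoprodI.lift_of (i := true) FG x
      · ext x
        simp only [MonoidHom.comp_apply]
        show Monoid.CoprodI.lift FG (e (Monoid.Coprod.inr x)) = (Subgroup.zpowers g).subtype x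
        have h1 : e (Monoid.Coprod.inr x) = Monoid.CoprodI.of (M := M) (i := false) x :=
          Monoid.Coprod.lift_apply_inr _ _ x
        rw [h1]
        exact Monoid.CoprodI.lift_of (i := false) FG x
    have := DFunLike.congr_fun hcomp2 w
    simp only [MonoidHom.comp_apply] at this
    rw [this, hw]
  have hew : e w = 1 := by
    by_contra hne
    letI : ∀ b, DecidableEq (M b) := fun b => Classical.decEq _
    set x := e w with hx
    let EQ : Monoid.CoprodI M ≃ Monoid.CoprodI.Word M :=
      @Monoid.CoprodI.Word.equiv Bool M _ instDecidableEqBool (fun b => Classical.decEq _)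
    set W := EQ x with hW
    have hxprod : W.prod = x := EQ.symm_apply_apply x
    have hLne : W.toList ≠ [] := by
      intro h0
      apply hne
      have hWe : W = Monoid.CoprodI.Word.empty := Monoid.CoprodI.Word.ext h0
      rw [← hxprod, hWe, Monoid.CoprodI.Word.prod_empty]
    have hone := W.ne_one
    have hchain := W.chain_ne
    have hprodlift : Monoid.CoprodI.lift FG x = (W.toList.map fun l => FG l.1 l.2).prod := by
      conv_lhs => rw [← hxprod]
      show Monoid.CoprodI.lift FG (W.toList.map fun l => Monoid.CoprodI.of l.2).prod = _
      rw [map_list_prod, List.map_map]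
      simp only [Function.comp_def, Monoid.CoprodI.lift_of]
    have hT : ∀ m : M true, FG true m ∈ H := fun m => m.2
    have hF : ∀ m : M false, FG false m ∈ Subgroup.zpowers g := fun m => m.2
    have hi : ∀ b (m : M b), FG b m = 1 → m = 1 := by
      intro b
      cases b
      · intro m h; exact Subtype.ext h
      · intro m h; exact Subtype.ext h
    exact PTAux.keyList g H f c hf hc hH hg M FG hT hF hi W.toList hLne hone hchain
      (hprodlift ▸ hlift)
  rw [← he'e w, hew, map_one]
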